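/- Let C be a clutter with a perfect matching e_1,…,e_g of König type. If C has no cycles of length 3 or 4 and C is unmixed, then for any two edges f_1, f_2 of C and any e_i, one has f_1 ∩ e_i ⊆ f_2 ∩ e_i or f_2 ∩ e_i ⊆ f_1 ∩ e_i. -/

import Mathlib

variable {V : Type} [Fintype V] [DecidableEq V]

/-- A clutter: a family of finsets (edges), none of which contains another. -/
def IsClutter (E : Set (Finset V)) : Prop :=
  ∀ e ∈ E, ∀ f ∈ E, e ⊆ f → e = f

/-- A vertex cover: a set of vertices meeting every edge. -/
def IsVertexCover (E : Set (Finset V)) (C : Finset V) : Prop :=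
  ∀ e ∈ E, (e ∩ C).Nonempty

/-- A minimal vertex cover. -/
def IsMinimalVertexCover (E : Set (Finset V)) (C : Finset V) : Prop :=
  IsVertexCover E C ∧ ∀ D ⊂ C, ¬ IsVertexCover E D

/-- The covering number: minimum cardinality of a vertex cover. -/
noncomputable def coveringNumber (E : Set (Finset V)) : ℕ :=
  sInf {n : ℕ | ∃ C : Finset V, IsVertexCover E C ∧ C.card = n}

/-- Unmixed: all minimal vertex covers have the same cardinality. -/
def Unmixed (E : Set (Finset V)) : Prop :=
  ∀ C D : Finset V, IsMinimalVertexCover E C → IsMinimalVertexCover E D →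
    C.card = D.card

/-- A matching: a set of pairwise disjoint edges. -/
def IsMatching (E : Set (Finset V)) (M : Finset (Finset V)) : Prop :=
  ↑M ⊆ E ∧ (M : Set (Finset V)).Pairwise Disjoint

/-- The König property: the maximum size of a matching equals the covering number. -/
def HasKonigProperty (E : Set (Finset V)) : Prop :=
  (∃ M : Finset (Finset V), IsMatching E M ∧ M.card = coveringNumber E) ∧
  ∀ M : Finset (Finset V), IsMatching E M → M.card ≤ coveringNumber E

/-- A perfect matching of König type: pairwise disjoint edges `em 0, …, em (g-1)`
whose union is the whole vertex set, where `g` is the covering number. -/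
def IsPerfectMatchingKT (E : Set (Finset V)) {g : ℕ} (em : Fin g → Finset V) : Prop :=
  (∀ i, em i ∈ E) ∧ (∀ i j, i ≠ j → Disjoint (em i) (em j)) ∧
  (∀ x : V, ∃ i, x ∈ em i) ∧ g = coveringNumber E

/-- An independent set: contains no edge. -/
def IsIndependentSet (E : Set (Finset V)) (F : Finset V) : Prop :=
  ∀ e ∈ E, ¬ e ⊆ F

/-- A facet of the independence complex: a maximal independent set. -/
def IsFacet (E : Set (Finset V)) (F : Finset V) : Prop :=
  IsIndependentSet E F ∧ ∀ G : Finset V, IsIndependentSet E G → F ⊆ G → F = G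

/-- The set of facets of the independence complex of a clutter. -/
def cFacets (E : Set (Finset V)) : Set (Finset V) := {F | IsFacet E F}

/-- `F : Fin s → Finset V` is a shelling order of the family of facets `Fac`. -/
def IsShelling {s : ℕ} (Fac : Set (Finset V)) (F : Fin s → Finset V) : Prop :=
  Function.Injective F ∧ (∀ G : Finset V, G ∈ Fac ↔ ∃ i, F i = G) ∧
  ∀ i j : Fin s, i < j →
    ∃ v ∈ F j \ F i, ∃ l : Fin s, l < j ∧ F j \ F l = {v}

/-- A family of facets is shellable if it admits a shelling order. -/
def Shellable (Fac : Set (Finset V)) : Prop :=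
  ∃ (s : ℕ) (F : Fin s → Finset V), IsShelling Fac F

/-- A family of facets is pure if all its members have the same cardinality. -/
def PureFamily (Fac : Set (Finset V)) : Prop :=
  ∀ F ∈ Fac, ∀ G ∈ Fac, F.card = G.card

/-- Pure shellable: pure and shellable. -/
def PureShellable (Fac : Set (Finset V)) : Prop :=
  PureFamily Fac ∧ Shellable Fac

/-- A free vertex: a vertex belonging to exactly one edge. -/
def HasFreeVertex (E : Set (Finset V)) : Prop :=
  ∃ x : V, ∃ e ∈ E, x ∈ e ∧ ∀ f ∈ E, x ∈ f → f = e

/-- A cycle of length `r`: `r` distinct vertices and `r` distinct edges such that each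
of the vertices lies in exactly two of the edges and each of the edges contains exactly
two of the vertices. -/
def HasCycleOfLength (E : Set (Finset V)) (r : ℕ) : Prop :=
  ∃ (v : Fin r → V) (f : Fin r → Finset V),
    Function.Injective v ∧ Function.Injective f ∧ (∀ j, f j ∈ E) ∧
    (∀ i : Fin r, (Finset.univ.filter (fun j => v i ∈ f j)).card = 2) ∧
    (∀ j : Fin r, (Finset.univ.filter (fun i => v i ∈ f j)).card = 2)

set_option linter.unusedSectionVars false

lemma cycle3 (E : Set (Finset V)) (e0 e1 e2 : Finset V) (v0 v1 v2 : V)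
    (he0 : e0 ∈ E) (he1 : e1 ∈ E) (he2 : e2 ∈ E)
    (h00 : v0 ∈ e0) (h01 : v0 ∈ e1) (h02 : v0 ∉ e2)
    (h10 : v1 ∉ e0) (h11 : v1 ∈ e1) (h12 : v1 ∈ e2)
    (h20 : v2 ∈ e0) (h21 : v2 ∉ e1) (h22 : v2 ∈ e2) :
    HasCycleOfLength E 3 := by
  refine ⟨![v0, v1, v2], ![e0, e1, e2], ?_, ?_, ?_, ?_, ?_⟩
  · intro a b hab; fin_cases a <;> fin_cases b <;> simp_all
  · intro a b hab; fin_cases a <;> fin_cases b <;> simp_all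
  · intro j; fin_cases j <;> simpa
  · intro i
    fin_cases i <;>
    · rw [show (Finset.univ : Finset (Fin 3)) = {0, 1, 2} by decide]
      rw [Finset.filter_insert, Finset.filter_insert, Finset.filter_singleton]
      simp [Finset.filter_insert, Finset.filter_singleton, h00, h01, h02, h10, h11, h12,
        h20, h21, h22]
  · intro j
    fin_cases j <;>
    · rw [show (Finset.univ : Finset (Fin 3)) = {0, 1, 2} by decide]
      rw [Finset.filter_insert, Finset.filter_insert, Finset.filter_singleton]
      simp [Finset.filter_insert, Finset.filter_singleton, h00, h01, h02, h10, h11, h12,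
        h20, h21, h22]

lemma cycle4 (E : Set (Finset V)) (e0 e1 e2 e3 : Finset V) (v0 v1 v2 v3 : V)
    (he0 : e0 ∈ E) (he1 : e1 ∈ E) (he2 : e2 ∈ E) (he3 : e3 ∈ E)
    (h00 : v0 ∈ e0) (h01 : v0 ∈ e1) (h02 : v0 ∉ e2) (h03 : v0 ∉ e3)
    (h10 : v1 ∉ e0) (h11 : v1 ∈ e1) (h12 : v1 ∈ e2) (h13 : v1 ∉ e3)
    (h20 : v2 ∉ e0) (h21 : v2 ∉ e1) (h22 : v2 ∈ e2) (h23 : v2 ∈ e3)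
    (h30 : v3 ∈ e0) (h31 : v3 ∉ e1) (h32 : v3 ∉ e2) (h33 : v3 ∈ e3) :
    HasCycleOfLength E 4 := by
  refine ⟨![v0, v1, v2, v3], ![e0, e1, e2, e3], ?_, ?_, ?_, ?_, ?_⟩
  · intro a b hab; fin_cases a <;> fin_cases b <;> simp_all
  · intro a b hab; fin_cases a <;> fin_cases b <;> simp_all
  · intro j; fin_cases j <;> simpa
  · intro i
    fin_cases i <;>
    · rw [show (Finset.univ : Finset (Fin 4)) = {0, 1, 2, 3} by decide]
      rw [Finset.filter_insert, Finset.filter_insert, Finset.filter_insert,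
        Finset.filter_singleton]
      simp [Finset.filter_insert, Finset.filter_singleton, h00, h01, h02, h03, h10, h11,
        h12, h13, h20, h21, h22, h23, h30, h31, h32, h33]
  · intro j
    fin_cases j <;>
    · rw [show (Finset.univ : Finset (Fin 4)) = {0, 1, 2, 3} by decide]
      rw [Finset.filter_insert, Finset.filter_insert, Finset.filter_insert,
        Finset.filter_singleton]
      simp [Finset.filter_insert, Finset.filter_singleton, h00, h01, h02, h03, h10, h11,
        h12, h13, h20, h21, h22, h23, h30, h31, h32, h33]

lemma exists_min_cover_subset (E : Set (Finset V)) (C : Finset V)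
    (hC : IsVertexCover E C) : ∃ D ⊆ C, IsMinimalVertexCover E D := by
  classical
  let T := {n : ℕ | ∃ D : Finset V, D ⊆ C ∧ IsVertexCover E D ∧ D.card = n}
  have hT : T.Nonempty := ⟨C.card, C, subset_rfl, hC, rfl⟩
  obtain ⟨D, hDC, hDcov, hDcard⟩ := Nat.sInf_mem hT
  refine ⟨D, hDC, hDcov, ?_⟩
  intro D' hD' hD'cov
  have h1 : sInf T ≤ D'.card := Nat.sInf_le ⟨D', hD'.subset.trans hDC, hD'cov, rfl⟩
  have h2 : D'.card < D.card := Finset.card_lt_card hD'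
  omega

/-- An unmixed clutter with a perfect matching of König type and without
cycles of length 3 or 4 satisfies the ordering condition on intersections with the
edges of the matching. -/
theorem unmixed_no_small_cycles_ordering
    (E : Set (Finset V)) (hclut : IsClutter E)
    {g : ℕ} (em : Fin g → Finset V) (hpm : IsPerfectMatchingKT E em)
    (h3 : ¬ HasCycleOfLength E 3) (h4 : ¬ HasCycleOfLength E 4)
    (hunmixed : Unmixed E) :
    ∀ f₁ ∈ E, ∀ f₂ ∈ E, ∀ i : Fin g,
      f₁ ∩ em i ⊆ f₂ ∩ em i ∨ f₂ ∩ em i ⊆ f₁ ∩ em i := by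
  classical
  obtain ⟨hE, hdisj, hcov, hg⟩ := hpm
  intro f₁ hf₁ f₂ hf₂ i
  by_contra hcon
  rw [not_or, Finset.not_subset, Finset.not_subset] at hcon
  obtain ⟨⟨x₁, hx₁mem, hx₁n⟩, ⟨x₂, hx₂mem, hx₂n⟩⟩ := hcon
  rw [Finset.mem_inter] at hx₁mem hx₂mem
  obtain ⟨hx₁f₁, hx₁e⟩ := hx₁mem
  obtain ⟨hx₂f₂, hx₂e⟩ := hx₂mem
  have hx₁f₂ : x₁ ∉ f₂ := fun h => hx₁n (Finset.mem_inter.mpr ⟨h, hx₁e⟩)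
  have hx₂f₁ : x₂ ∉ f₁ := fun h => hx₂n (Finset.mem_inter.mpr ⟨h, hx₂e⟩)
  have hx₁x₂ : x₁ ≠ x₂ := fun h => hx₁f₂ (h ▸ hx₂f₂)
  -- Case A: some common vertex of f₁, f₂ outside em i
  by_cases hA : ∃ c, c ∈ f₁ ∧ c ∈ f₂ ∧ c ∉ em i
  · obtain ⟨c, hc1, hc2, hc3⟩ := hA
    exact h3 (cycle3 E (em i) f₁ f₂ x₁ c x₂ (hE i) hf₁ hf₂
      hx₁e hx₁f₁ hx₁f₂ hc3 hc1 hc2 hx₂e hx₂f₁ hx₂f₂)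
  push_neg at hA
  -- Case B: f₁ ∩ f₂ ⊆ em i
  set C : Finset V := (Finset.univ \ (f₁ ∪ f₂)) ∪ {x₁, x₂} with hCdef
  have hx₁C : x₁ ∈ C := by simp [hCdef]
  have hx₂C : x₂ ∈ C := by simp [hCdef]
  have hCcov : IsVertexCover E C := by
    intro e he
    by_contra hne
    rw [Finset.not_nonempty_iff_eq_empty] at hne
    have hout : ∀ z ∈ e, z ∉ C := by
      intro z hz hzC
      exact Finset.notMem_empty z (hne ▸ Finset.mem_inter.mpr ⟨hz, hzC⟩)
    have hsub : ∀ z ∈ e, z ∈ f₁ ∪ f₂ := by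
      intro z hz
      by_contra hzn
      exact hout z hz (Finset.mem_union_left _ (Finset.mem_sdiff.mpr ⟨Finset.mem_univ z, hzn⟩))
    have hx₁ne : x₁ ∉ e := fun h => hout x₁ h hx₁C
    have hx₂ne : x₂ ∉ e := fun h => hout x₂ h hx₂C
    -- e is not contained in f₁ nor in f₂
    have hnsub1 : ¬ e ⊆ f₁ := by
      intro h
      exact hx₁ne ((hclut e he f₁ hf₁ h) ▸ hx₁f₁)
    have hnsub2 : ¬ e ⊆ f₂ := by
      intro h
      exact hx₂ne ((hclut e he f₂ hf₂ h) ▸ hx₂f₂)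
    obtain ⟨p, hpe, hpf₂⟩ := Finset.not_subset.mp hnsub2
    obtain ⟨q, hqe, hqf₁⟩ := Finset.not_subset.mp hnsub1
    have hpf₁ : p ∈ f₁ := (Finset.mem_union.mp (hsub p hpe)).resolve_right hpf₂
    have hqf₂ : q ∈ f₂ := (Finset.mem_union.mp (hsub q hqe)).resolve_left hqf₁
    by_cases hP : ∃ p', p' ∈ e ∧ p' ∉ f₂ ∧ p' ∉ em i
    · by_cases hQ : ∃ q', q' ∈ e ∧ q' ∉ f₁ ∧ q' ∉ em i
      · obtain ⟨p', hp'e, hp'f₂, hp'i⟩ := hP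
        obtain ⟨q', hq'e, hq'f₁, hq'i⟩ := hQ
        have hp'f₁ : p' ∈ f₁ := (Finset.mem_union.mp (hsub p' hp'e)).resolve_right hp'f₂
        have hq'f₂ : q' ∈ f₂ := (Finset.mem_union.mp (hsub q' hq'e)).resolve_left hq'f₁
        exact h4 (cycle4 E (em i) f₁ e f₂ x₁ p' q' x₂ (hE i) hf₁ he hf₂
          hx₁e hx₁f₁ hx₁ne hx₁f₂
          hp'i hp'f₁ hp'e hp'f₂
          hq'i hq'f₁ hq'e hq'f₂
          hx₂e hx₂f₁ hx₂ne hx₂f₂)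
      · push_neg at hQ
        obtain ⟨p', hp'e, hp'f₂, hp'i⟩ := hP
        have hp'f₁ : p' ∈ f₁ := (Finset.mem_union.mp (hsub p' hp'e)).resolve_right hp'f₂
        have hqi : q ∈ em i := hQ q hqe hqf₁
        exact h3 (cycle3 E (em i) f₁ e x₁ p' q (hE i) hf₁ he
          hx₁e hx₁f₁ hx₁ne hp'i hp'f₁ hp'e hqi hqf₁ hqe)
    · push_neg at hP
      by_cases hQ : ∃ q', q' ∈ e ∧ q' ∉ f₁ ∧ q' ∉ em i
      · obtain ⟨q', hq'e, hq'f₁, hq'i⟩ := hQ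
        have hq'f₂ : q' ∈ f₂ := (Finset.mem_union.mp (hsub q' hq'e)).resolve_left hq'f₁
        have hpi : p ∈ em i := hP p hpe hpf₂
        exact h3 (cycle3 E (em i) f₂ e x₂ q' p (hE i) hf₂ he
          hx₂e hx₂f₂ hx₂ne hq'i hq'f₂ hq'e hpi hpf₂ hpe)
      · push_neg at hQ
        have hsubei : e ⊆ em i := by
          intro z hz
          rcases Finset.mem_union.mp (hsub z hz) with hz1 | hz2
          · by_cases hz2' : z ∈ f₂
            · exact hA z hz1 hz2'
            · exact hP z hz hz2'
          · by_cases hz1' : z ∈ f₁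
            · exact hA z hz1' hz2
            · exact hQ z hz hz1'
        have : e = em i := hclut e he (em i) (hE i) hsubei
        exact hx₁ne (this ▸ hx₁e)
  -- f₁ ∩ C = {x₁}, f₂ ∩ C = {x₂}
  have hf₁C : f₁ ∩ C = {x₁} := by
    ext z
    simp only [Finset.mem_inter, hCdef, Finset.mem_union, Finset.mem_sdiff,
      Finset.mem_univ, true_and, Finset.mem_insert, Finset.mem_singleton]
    constructor
    · rintro ⟨hz1, hz2 | hz3 | hz4⟩
      · exact absurd (Or.inl hz1) hz2
      · exact hz3
      · exact absurd (hz4 ▸ hz1) hx₂f₁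
    · rintro rfl
      exact ⟨hx₁f₁, Or.inr (Or.inl rfl)⟩
  have hf₂C : f₂ ∩ C = {x₂} := by
    ext z
    simp only [Finset.mem_inter, hCdef, Finset.mem_union, Finset.mem_sdiff,
      Finset.mem_univ, true_and, Finset.mem_insert, Finset.mem_singleton]
    constructor
    · rintro ⟨hz1, hz2 | hz3 | hz4⟩
      · exact absurd (Or.inr hz1) hz2
      · exact absurd (hz3 ▸ hz1) hx₁f₂
      · exact hz4
    · rintro rfl
      exact ⟨hx₂f₂, Or.inr (Or.inr rfl)⟩
  -- a minimal vertex cover C' inside C, containing x₁ and x₂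
  obtain ⟨C', hC'C, hC'cov, hC'min⟩ := exists_min_cover_subset E C hCcov
  have hx₁C' : x₁ ∈ C' := by
    obtain ⟨y, hy⟩ := hC'cov f₁ hf₁
    have : y ∈ f₁ ∩ C := Finset.inter_subset_inter subset_rfl hC'C hy
    rw [hf₁C, Finset.mem_singleton] at this
    exact this ▸ (Finset.mem_inter.mp hy).2
  have hx₂C' : x₂ ∈ C' := by
    obtain ⟨y, hy⟩ := hC'cov f₂ hf₂
    have : y ∈ f₂ ∩ C := Finset.inter_subset_inter subset_rfl hC'C hy
    rw [hf₂C, Finset.mem_singleton] at this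
    exact this ▸ (Finset.mem_inter.mp hy).2
  -- a minimal vertex cover D of cardinality g
  have hgpos : 0 < g := i.pos
  have hEne : ∅ ∉ E := by
    intro h0
    have hempty : {n : ℕ | ∃ C : Finset V, IsVertexCover E C ∧ C.card = n} = ∅ := by
      ext n
      simp only [Set.mem_setOf_eq, Set.mem_empty_iff_false, iff_false]
      rintro ⟨C₀, hcov₀, -⟩
      have := hcov₀ ∅ h0
      simp at this
    have : coveringNumber E = 0 := by
      rw [coveringNumber, hempty, Nat.sInf_empty]
    omega
  have hunivcov : IsVertexCover E Finset.univ := by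
    intro e he
    rw [Finset.inter_univ]
    rw [Finset.nonempty_iff_ne_empty]
    intro h; exact hEne (h ▸ he)
  have hSne : {n : ℕ | ∃ C : Finset V, IsVertexCover E C ∧ C.card = n}.Nonempty :=
    ⟨Finset.univ.card, Finset.univ, hunivcov, rfl⟩
  obtain ⟨D, hDcov, hDcard⟩ := Nat.sInf_mem hSne
  have hDcard' : D.card = g := by rw [hDcard, ← coveringNumber, ← hg]
  have hDmin : IsMinimalVertexCover E D := by
    refine ⟨hDcov, ?_⟩
    intro D' hD' hD'cov
    have h1 : sInf {n : ℕ | ∃ C : Finset V, IsVertexCover E C ∧ C.card = n} ≤ D'.card :=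
      Nat.sInf_le ⟨D', hD'cov, rfl⟩
    have h2 : D'.card < D.card := Finset.card_lt_card hD'
    omega
  -- cardinality of C' is at least g + 1
  have hC'eq : C' = Finset.univ.biUnion (fun k : Fin g => C' ∩ em k) := by
    ext z
    simp only [Finset.mem_biUnion, Finset.mem_univ, true_and, Finset.mem_inter]
    constructor
    · intro hz
      obtain ⟨k, hk⟩ := hcov z
      exact ⟨k, hz, hk⟩
    · rintro ⟨k, hk, -⟩; exact hk
  have hC'card : C'.card = ∑ k : Fin g, (C' ∩ em k).card := by
    conv_lhs => rw [hC'eq]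
    apply Finset.card_biUnion
    intro a _ b _ hab
    exact Finset.disjoint_of_subset_left (Finset.inter_subset_right)
      (Finset.disjoint_of_subset_right (Finset.inter_subset_right) (hdisj a b hab))
  have hterm : ∀ k : Fin g, (if k = i then 2 else 1) ≤ (C' ∩ em k).card := by
    intro k
    by_cases hk : k = i
    · subst hk
      simp only [if_pos rfl]
      have h2 : ({x₁, x₂} : Finset V) ⊆ C' ∩ em k :=
        Finset.insert_subset (Finset.mem_inter.mpr ⟨hx₁C', hx₁e⟩)
          (Finset.singleton_subset_iff.mpr (Finset.mem_inter.mpr ⟨hx₂C', hx₂e⟩))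
      calc 2 = ({x₁, x₂} : Finset V).card := (Finset.card_pair hx₁x₂).symm
        _ ≤ _ := Finset.card_le_card h2
    · simp only [if_neg hk]
      rw [Nat.succ_le_iff, Finset.card_pos, Finset.inter_comm]
      exact hC'cov (em k) (hE k)
  have hsumge : g + 1 ≤ ∑ k : Fin g, (C' ∩ em k).card := by
    have hite : ∑ k : Fin g, (if k = i then 2 else 1) = g + 1 := by
      calc ∑ k : Fin g, (if k = i then 2 else 1)
          = ∑ k : Fin g, ((if k = i then 1 else 0) + 1) := by
            apply Finset.sum_congr rfl; intro k _; split <;> rfl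
        _ = (∑ k : Fin g, (if k = i then 1 else 0)) + ∑ _k : Fin g, 1 :=
            Finset.sum_add_distrib
        _ = 1 + g := by simp [Finset.sum_ite_eq']
        _ = g + 1 := by omega
    calc g + 1 = ∑ k : Fin g, (if k = i then 2 else 1) := hite.symm
      _ ≤ _ := Finset.sum_le_sum (fun k _ => hterm k)
  have := hunmixed C' D ⟨hC'cov, hC'min⟩ hDmin
  omega
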